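/- arXiv:2502.11145 — 2 statements merged into one kernel-verified Lean document; each statement's English description precedes it below -/
import Mathlib

section
/- (Pappus–Guldin theorem for volume) Let f : [a,b] → ℝ be continuous and nonnegative with 0 ≤ a. The volume of the solid obtained by revolving the region {(x,y) : a ≤ x ≤ b, 0 ≤ y ≤ f x} about the y-axis equals 2π ∫_a^b x f(x) dx. -/
open MeasureTheory Real
open Set

theorem pappus_guldin (a b : ℝ) (ha : 0 ≤ a) (hab : a ≤ b) (f : ℝ → ℝ)
    (hf : ContinuousOn f (Set.Icc a b)) (hf0 : ∀ x ∈ Set.Icc a b, 0 ≤ f x) :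
    volume {p : ℝ × ℝ × ℝ | a ≤ Real.sqrt (p.1 ^ 2 + p.2.1 ^ 2) ∧
        Real.sqrt (p.1 ^ 2 + p.2.1 ^ 2) ≤ b ∧ 0 ≤ p.2.2 ∧
        p.2.2 ≤ f (Real.sqrt (p.1 ^ 2 + p.2.1 ^ 2))}
      = ENNReal.ofReal (2 * π * ∫ x in a..b, x * f x) := by
  set F : ℝ → ℝ := Set.IccExtend hab ((Set.Icc a b).restrict f) with hFdef
  have hF : Continuous F := (continuousOn_iff_continuous_restrict.mp hf).comp continuous_projIcc
  have hFeq : ∀ x ∈ Set.Icc a b, F x = f x := fun x hx => by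
    rw [hFdef, Set.IccExtend_of_mem hab _ hx]; rfl
  have hF0 : ∀ x, 0 ≤ F x := fun x => hf0 _ (Set.projIcc a b hab x).2
  set r : ℝ × ℝ → ℝ := fun q => Real.sqrt (q.1 ^ 2 + q.2 ^ 2) with hrdef
  have hr : Continuous r := (continuous_fst.pow 2 |>.add (continuous_snd.pow 2)).sqrt
  set A : Set (ℝ × ℝ) := {q | a ≤ r q ∧ r q ≤ b} with hAdef
  have hAmeas : MeasurableSet A :=
    (measurableSet_le measurable_const hr.measurable).inter
      (measurableSet_le hr.measurable measurable_const)
  -- step 1: rewrite using F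
  have hset : {p : ℝ × ℝ × ℝ | a ≤ Real.sqrt (p.1 ^ 2 + p.2.1 ^ 2) ∧
        Real.sqrt (p.1 ^ 2 + p.2.1 ^ 2) ≤ b ∧ 0 ≤ p.2.2 ∧
        p.2.2 ≤ f (Real.sqrt (p.1 ^ 2 + p.2.1 ^ 2))} =
      (MeasurableEquiv.prodAssoc : (ℝ × ℝ) × ℝ ≃ᵐ ℝ × ℝ × ℝ) ''
        {q : (ℝ × ℝ) × ℝ | (q.1 ∈ A) ∧ 0 ≤ q.2 ∧ q.2 ≤ F (r q.1)} := by
    ext ⟨u, v, y⟩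
    rw [MeasurableEquiv.image_eq_preimage_symm]
    simp only [Set.mem_setOf_eq, Set.mem_preimage]
    show _ ↔ ((u, v) ∈ A ∧ 0 ≤ y ∧ y ≤ F (r (u, v)))
    constructor
    · rintro ⟨h1, h2, h3, h4⟩
      exact ⟨⟨h1, h2⟩, h3, by rw [hFeq _ ⟨h1, h2⟩]; exact h4⟩
    · rintro ⟨⟨h1, h2⟩, h3, h4⟩
      exact ⟨h1, h2, h3, by rw [← hFeq _ ⟨h1, h2⟩]; exact h4⟩
  have hSmeas : MeasurableSet {q : (ℝ × ℝ) × ℝ | (q.1 ∈ A) ∧ 0 ≤ q.2 ∧ q.2 ≤ F (r q.1)} := by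
    refine ((hAmeas.preimage measurable_fst).inter ?_)
    exact (measurableSet_le measurable_const measurable_snd).inter
      (measurableSet_le measurable_snd ((hF.comp hr).measurable.comp measurable_fst))
  rw [hset, MeasurableEquiv.image_eq_preimage_symm,
    (volume_preserving_prodAssoc.symm).measure_preimage hSmeas.nullMeasurableSet]
  -- Fubini: slice in the last coordinate
  have h2 : volume {q : (ℝ × ℝ) × ℝ | (q.1 ∈ A) ∧ 0 ≤ q.2 ∧ q.2 ≤ F (r q.1)}
      = ∫⁻ q in A, ENNReal.ofReal (F (r q)) := by
    rw [Measure.volume_eq_prod, Measure.prod_apply hSmeas, ← lintegral_indicator hAmeas]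
    congr 1
    ext q
    by_cases hq : q ∈ A
    · have : (Prod.mk q ⁻¹' {q : (ℝ × ℝ) × ℝ | (q.1 ∈ A) ∧ 0 ≤ q.2 ∧ q.2 ≤ F (r q.1)})
          = Set.Icc 0 (F (r q)) := by
        ext y; simp [hq, Set.mem_Icc]
      rw [this, Real.volume_Icc, Set.indicator_of_mem hq, sub_zero]
    · have : (Prod.mk q ⁻¹' {q : (ℝ × ℝ) × ℝ | (q.1 ∈ A) ∧ 0 ≤ q.2 ∧ q.2 ≤ F (r q.1)})
          = (∅ : Set ℝ) := by
        ext y; simp [hq]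
      rw [this, measure_empty, Set.indicator_of_notMem hq]
  rw [h2]
  -- compactness and integrability
  have hAsub : A ⊆ Metric.closedBall (0 : ℝ × ℝ) b := by
    intro q hq
    have h1 : |q.1| ≤ r q := by
      rw [hrdef, ← Real.sqrt_sq_eq_abs]
      exact Real.sqrt_le_sqrt (by nlinarith [sq_nonneg q.2])
    have h2 : |q.2| ≤ r q := by
      rw [hrdef, ← Real.sqrt_sq_eq_abs]
      exact Real.sqrt_le_sqrt (by nlinarith [sq_nonneg q.1])
    rw [Metric.mem_closedBall, dist_zero_right, Prod.norm_def]
    exact max_le (h1.trans hq.2) (h2.trans hq.2)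
  have hAclosed : IsClosed A := by
    have : A = r ⁻¹' (Set.Icc a b) := rfl
    rw [this]
    exact isClosed_Icc.preimage hr
  have hAcomp : IsCompact A :=
    (isCompact_closedBall (0 : ℝ × ℝ) b).of_isClosed_subset hAclosed hAsub
  have hint : IntegrableOn (fun q => F (r q)) A := ((hF.comp hr).continuousOn).integrableOn_compact hAcomp
  have h3 : ∫⁻ q in A, ENNReal.ofReal (F (r q)) = ENNReal.ofReal (∫ q in A, F (r q)) :=
    (ofReal_integral_eq_lintegral_ofReal hint (Filter.Eventually.of_forall fun q => hF0 _)).symm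
  rw [h3]
  congr 1
  -- change of variables
  have h4 : ∫ q in A, F (r q) = ∫ q : ℝ × ℝ, A.indicator (fun q => F (r q)) q :=
    (integral_indicator hAmeas).symm
  rw [h4, ← integral_comp_polarCoord_symm]
  have h5 : ∀ p ∈ polarCoord.target,
      p.1 • A.indicator (fun q => F (r q)) (polarCoord.symm p)
        = (Set.Icc a b).indicator (fun t => t * F t) p.1 := by
    rintro ⟨R, θ⟩ hp
    have hR : 0 < R := hp.1
    have hrp : r (polarCoord.symm (R, θ)) = R := by
      rw [polarCoord_symm_apply, hrdef]
      have h := sin_sq_add_cos_sq θ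
      have : (R * Real.cos θ) ^ 2 + (R * Real.sin θ) ^ 2 = R ^ 2 := by nlinarith
      simp only [this]
      exact Real.sqrt_sq hR.le
    have hmem : polarCoord.symm (R, θ) ∈ A ↔ R ∈ Set.Icc a b := by
      simp only [hAdef, Set.mem_setOf_eq, hrp, Set.mem_Icc]
    by_cases hRm : R ∈ Set.Icc a b
    · rw [Set.indicator_of_mem (hmem.mpr hRm), Set.indicator_of_mem hRm, hrp, smul_eq_mul]
    · rw [Set.indicator_of_notMem (fun h => hRm (hmem.mp h)),
        Set.indicator_of_notMem hRm, smul_zero]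
  rw [setIntegral_congr_fun polarCoord.open_target.measurableSet h5]
  have h6 : ∫ p in polarCoord.target, (Set.Icc a b).indicator (fun t => t * F t) p.1
      = (∫ t in Set.Ioi (0:ℝ), (Set.Icc a b).indicator (fun t => t * F t) t)
          * ∫ θ in Set.Ioo (-π) π, (1:ℝ) := by
    rw [polarCoord_target, Measure.volume_eq_prod, ← setIntegral_prod_mul]
    simp
  rw [h6]
  have h7 : (∫ θ in Set.Ioo (-π) π, (1:ℝ)) = 2 * π := by
    rw [setIntegral_const, measureReal_def, Real.volume_Ioo, smul_eq_mul, mul_one,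
      ENNReal.toReal_ofReal (by linarith [pi_pos] : (0:ℝ) ≤ π - -π)]
    ring
  rw [h7]
  have h8 : (∫ t in Set.Ioi (0:ℝ), (Set.Icc a b).indicator (fun t => t * F t) t)
      = ∫ x in a..b, x * f x := by
    rw [setIntegral_indicator measurableSet_Icc]
    have hae : (Set.Ioi (0:ℝ) ∩ Set.Icc a b : Set ℝ) =ᵐ[volume] Set.Ioc a b := by
      rw [Filter.eventuallyEq_set]
      filter_upwards [compl_mem_ae_iff.2 (Real.volume_singleton (a := a))] with x hx
      simp only [Set.mem_inter_iff, Set.mem_Ioi, Set.mem_Icc, Set.mem_Ioc, Set.mem_compl_iff,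
        Set.mem_singleton_iff] at hx ⊢
      constructor
      · rintro ⟨h0, h1, h2⟩
        exact ⟨lt_of_le_of_ne h1 (Ne.symm hx), h2⟩
      · rintro ⟨h1, h2⟩
        exact ⟨lt_of_le_of_lt ha h1, h1.le, h2⟩
    rw [setIntegral_congr_set hae, intervalIntegral.integral_of_le hab]
    exact setIntegral_congr_fun measurableSet_Ioc fun x hx => by
      rw [hFeq x (Set.Ioc_subset_Icc_self hx)]
  rw [h8]
  ring
end

section
/- The volume of a torus obtained by revolving a disk of radius r centered at distance R from the axis (with 0 < r ≤ R) equals 2π²Rr², i.e., the area of the disk (πr²) times the circumference (2πR) traversed by its center. -/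
open MeasureTheory Real Set

/-- Volume of the closed disk. -/
lemma volume_closed_disk (c : ℝ) (hc : 0 ≤ c) :
    volume {q : ℝ × ℝ | q.1 ^ 2 + q.2 ^ 2 ≤ c ^ 2} = ENNReal.ofReal (π * c ^ 2) := by
  have hset : Complex.measurableEquivRealProd ⁻¹' {q : ℝ × ℝ | q.1 ^ 2 + q.2 ^ 2 ≤ c ^ 2}
      = Metric.closedBall (0 : ℂ) c := by
    ext z
    simp only [Set.mem_preimage, Complex.measurableEquivRealProd_apply, Set.mem_setOf_eq,
      Metric.mem_closedBall, Complex.dist_eq, sub_zero]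
    have : z.re ^ 2 + z.im ^ 2 = ‖z‖ ^ 2 := by
      rw [Complex.sq_norm, Complex.normSq_apply]; ring
    rw [this]
    constructor
    · intro h; exact le_of_sq_le_sq h hc
    · intro h; exact pow_le_pow_left₀ (norm_nonneg z) h 2
  have h := Complex.volume_preserving_equiv_real_prod.measure_preimage
    (s := {q : ℝ × ℝ | q.1 ^ 2 + q.2 ^ 2 ≤ c ^ 2})
    ((isClosed_le (by fun_prop) continuous_const).measurableSet.nullMeasurableSet)
  rw [hset, Complex.volume_closedBall] at h
  rw [← h, ← ENNReal.ofReal_pow hc, ← ENNReal.ofReal_coe_nnreal, ← ENNReal.ofReal_mul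
    (by positivity)]
  congr 1
  rw [NNReal.coe_real_pi]; ring

/-- Volume of the open disk. -/
lemma volume_open_disk (c : ℝ) (hc : 0 ≤ c) :
    volume {q : ℝ × ℝ | q.1 ^ 2 + q.2 ^ 2 < c ^ 2} = ENNReal.ofReal (π * c ^ 2) := by
  have hset : Complex.measurableEquivRealProd ⁻¹' {q : ℝ × ℝ | q.1 ^ 2 + q.2 ^ 2 < c ^ 2}
      = Metric.ball (0 : ℂ) c := by
    ext z
    simp only [Set.mem_preimage, Complex.measurableEquivRealProd_apply, Set.mem_setOf_eq,
      Metric.mem_ball, Complex.dist_eq, sub_zero]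
    have : z.re ^ 2 + z.im ^ 2 = ‖z‖ ^ 2 := by
      rw [Complex.sq_norm, Complex.normSq_apply]; ring
    rw [this]
    constructor
    · intro h
      by_contra hcon
      push_neg at hcon
      exact absurd (pow_le_pow_left₀ hc hcon 2) (not_le.2 h)
    · intro h
      have := pow_lt_pow_left₀ h (norm_nonneg z) two_ne_zero
      exact this
  have h := Complex.volume_preserving_equiv_real_prod.measure_preimage
    (s := {q : ℝ × ℝ | q.1 ^ 2 + q.2 ^ 2 < c ^ 2})
    ((isOpen_lt (by fun_prop) continuous_const).measurableSet.nullMeasurableSet)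
  rw [hset, Complex.volume_ball] at h
  rw [← h, ← ENNReal.ofReal_pow hc, ← ENNReal.ofReal_coe_nnreal, ← ENNReal.ofReal_mul
    (by positivity)]
  congr 1
  rw [NNReal.coe_real_pi]; ring

/-- Volume of a closed annulus. -/
lemma volume_annulus (a b : ℝ) (ha : 0 ≤ a) (hab : a ≤ b) :
    volume {q : ℝ × ℝ | a ^ 2 ≤ q.1 ^ 2 + q.2 ^ 2 ∧ q.1 ^ 2 + q.2 ^ 2 ≤ b ^ 2}
      = ENNReal.ofReal (π * (b ^ 2 - a ^ 2)) := by
  have hb : 0 ≤ b := ha.trans hab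
  have hset : {q : ℝ × ℝ | a ^ 2 ≤ q.1 ^ 2 + q.2 ^ 2 ∧ q.1 ^ 2 + q.2 ^ 2 ≤ b ^ 2}
      = {q : ℝ × ℝ | q.1 ^ 2 + q.2 ^ 2 ≤ b ^ 2} \ {q : ℝ × ℝ | q.1 ^ 2 + q.2 ^ 2 < a ^ 2} := by
    ext q
    simp only [Set.mem_setOf_eq, Set.mem_diff, not_lt]
    tauto
  rw [hset, measure_diff]
  · rw [volume_closed_disk b hb, volume_open_disk a ha,
      ← ENNReal.ofReal_sub _ (by positivity)]
    congr 1; ring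
  · intro q hq
    simp only [Set.mem_setOf_eq] at *
    exact hq.le.trans (by nlinarith)
  · exact ((isOpen_lt (by fun_prop) continuous_const).measurableSet).nullMeasurableSet
  · rw [volume_open_disk a ha]; exact ENNReal.ofReal_ne_top

/-- Volume of the horizontal slice of the torus at height `z`. -/
lemma volume_torus_slice (R r : ℝ) (hr : 0 < r) (hrR : r ≤ R) (z : ℝ) :
    volume {q : ℝ × ℝ | (Real.sqrt (q.1 ^ 2 + q.2 ^ 2) - R) ^ 2 + z ^ 2 ≤ r ^ 2}
      = ENNReal.ofReal (4 * π * R * Real.sqrt (r ^ 2 - z ^ 2)) := by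
  by_cases hz : z ^ 2 ≤ r ^ 2
  · set s := Real.sqrt (r ^ 2 - z ^ 2) with hs_def
    have hs0 : 0 ≤ s := Real.sqrt_nonneg _
    have hs2 : s ^ 2 = r ^ 2 - z ^ 2 := Real.sq_sqrt (by linarith)
    have hsr : s ≤ r := by
      rw [← Real.sqrt_sq hr.le]
      exact Real.sqrt_le_sqrt (by nlinarith)
    have hsR : s ≤ R := hsr.trans hrR
    have hset : {q : ℝ × ℝ | (Real.sqrt (q.1 ^ 2 + q.2 ^ 2) - R) ^ 2 + z ^ 2 ≤ r ^ 2}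
        = {q : ℝ × ℝ | (R - s) ^ 2 ≤ q.1 ^ 2 + q.2 ^ 2 ∧ q.1 ^ 2 + q.2 ^ 2 ≤ (R + s) ^ 2} := by
      ext q
      have hu : (0:ℝ) ≤ q.1 ^ 2 + q.2 ^ 2 := by positivity
      have husq : Real.sqrt (q.1 ^ 2 + q.2 ^ 2) ^ 2 = q.1 ^ 2 + q.2 ^ 2 := Real.sq_sqrt hu
      have hun : 0 ≤ Real.sqrt (q.1 ^ 2 + q.2 ^ 2) := Real.sqrt_nonneg _
      simp only [Set.mem_setOf_eq]
      constructor
      · intro h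
        have h1 : (Real.sqrt (q.1 ^ 2 + q.2 ^ 2) - R) ^ 2 ≤ s ^ 2 := by linarith
        obtain ⟨hl, hr'⟩ := abs_le_of_sq_le_sq' h1 hs0
        constructor
        · rw [← husq]; exact pow_le_pow_left₀ (by linarith) (by linarith) 2
        · rw [← husq]; exact pow_le_pow_left₀ hun (by linarith) 2
      · intro ⟨h1, h2⟩
        have hl : R - s ≤ Real.sqrt (q.1 ^ 2 + q.2 ^ 2) := by
          rw [← Real.sqrt_sq (by linarith : (0:ℝ) ≤ R - s)]
          exact Real.sqrt_le_sqrt h1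
        have hr' : Real.sqrt (q.1 ^ 2 + q.2 ^ 2) ≤ R + s := by
          rw [← Real.sqrt_sq (by linarith : (0:ℝ) ≤ R + s)]
          exact Real.sqrt_le_sqrt h2
        nlinarith [sq_le_sq' (by linarith : -s ≤ Real.sqrt (q.1 ^ 2 + q.2 ^ 2) - R)
          (by linarith : Real.sqrt (q.1 ^ 2 + q.2 ^ 2) - R ≤ s)]
    rw [hset, volume_annulus (R - s) (R + s) (by linarith) (by linarith)]
    congr 1; ring
  · push_neg at hz
    have hset : {q : ℝ × ℝ | (Real.sqrt (q.1 ^ 2 + q.2 ^ 2) - R) ^ 2 + z ^ 2 ≤ r ^ 2}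
        = (∅ : Set (ℝ × ℝ)) := by
      ext q
      simp only [Set.mem_setOf_eq, Set.mem_empty_iff_false, iff_false, not_le]
      nlinarith [sq_nonneg (Real.sqrt (q.1 ^ 2 + q.2 ^ 2) - R)]
    have h0 : Real.sqrt (r ^ 2 - z ^ 2) = 0 := Real.sqrt_eq_zero'.2 (by linarith)
    rw [hset, measure_empty, h0]
    simp

lemma integral_sqrt_sq_sub_sq (r : ℝ) (hr : 0 < r) :
    ∫ z in (-r)..r, Real.sqrt (r ^ 2 - z ^ 2) = π * r ^ 2 / 2 := by
  have h1 : ∀ z : ℝ, Real.sqrt (r ^ 2 - z ^ 2) = r * Real.sqrt (1 - (z / r) ^ 2) := by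
    intro z
    rw [show r ^ 2 - z ^ 2 = r ^ 2 * (1 - (z / r) ^ 2) by field_simp,
      Real.sqrt_mul (sq_nonneg r), Real.sqrt_sq hr.le]
  simp_rw [h1]
  rw [intervalIntegral.integral_const_mul]
  have h2 : ∫ z in (-r)..r, Real.sqrt (1 - (z / r) ^ 2)
      = r • ∫ u in (-r/r)..(r/r), Real.sqrt (1 - u ^ 2) :=
    intervalIntegral.integral_comp_div (c := r) (fun u => Real.sqrt (1 - u ^ 2)) hr.ne'
  rw [show -r/r = (-1 : ℝ) by field_simp, show r/r = (1:ℝ) by field_simp] at h2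
  rw [h2, integral_sqrt_one_sub_sq, smul_eq_mul]
  ring

lemma torus_integrand_cont (R r : ℝ) : Continuous (fun z : ℝ => 4 * π * R * Real.sqrt (r ^ 2 - z ^ 2)) := by
  fun_prop

theorem torus_volume (R r : ℝ) (hr : 0 < r) (hrR : r ≤ R) :
    volume {p : ℝ × ℝ × ℝ | (Real.sqrt (p.1 ^ 2 + p.2.1 ^ 2) - R) ^ 2 + p.2.2 ^ 2 ≤ r ^ 2}
      = ENNReal.ofReal (2 * π ^ 2 * R * r ^ 2) ∧
    2 * π ^ 2 * R * r ^ 2 = (π * r ^ 2) * (2 * π * R) := by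
  constructor
  · set S : Set (ℝ × ℝ × ℝ) := {q : ℝ × ℝ × ℝ |
      (Real.sqrt (q.2.1 ^ 2 + q.2.2 ^ 2) - R) ^ 2 + q.1 ^ 2 ≤ r ^ 2} with hS_def
    have hSmeas : MeasurableSet S :=
      (isClosed_le (by fun_prop) continuous_const).measurableSet
    -- measure preserving map (x, y, z) ↦ (z, (x, y))
    have hp1 : MeasurePreserving (MeasurableEquiv.prodAssoc.symm :
        ℝ × ℝ × ℝ ≃ᵐ (ℝ × ℝ) × ℝ) volume volume :=
      volume_preserving_prodAssoc.symm _
    have hp2 : MeasurePreserving (Prod.swap : (ℝ × ℝ) × ℝ → ℝ × (ℝ × ℝ)) volume volume := by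
      rw [Measure.volume_eq_prod (ℝ × ℝ) ℝ, Measure.volume_eq_prod ℝ (ℝ × ℝ)]
      exact Measure.measurePreserving_swap
    have hp := hp2.comp hp1
    have hT : {p : ℝ × ℝ × ℝ | (Real.sqrt (p.1 ^ 2 + p.2.1 ^ 2) - R) ^ 2 + p.2.2 ^ 2 ≤ r ^ 2}
        = (Prod.swap ∘ (MeasurableEquiv.prodAssoc.symm : ℝ × ℝ × ℝ ≃ᵐ (ℝ × ℝ) × ℝ)) ⁻¹' S :=
      rfl
    rw [hT, hp.measure_preimage hSmeas.nullMeasurableSet]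
    have hslice : ∀ z : ℝ, volume (Prod.mk z ⁻¹' S)
        = ENNReal.ofReal (4 * π * R * Real.sqrt (r ^ 2 - z ^ 2)) := by
      intro z
      have : Prod.mk z ⁻¹' S
          = {q : ℝ × ℝ | (Real.sqrt (q.1 ^ 2 + q.2 ^ 2) - R) ^ 2 + z ^ 2 ≤ r ^ 2} := rfl
      rw [this, volume_torus_slice R r hr hrR z]
    rw [Measure.volume_eq_prod, Measure.prod_apply hSmeas]
    simp_rw [hslice]
    -- integrability of the slice-area function
    set f : ℝ → ℝ := fun z => 4 * π * R * Real.sqrt (r ^ 2 - z ^ 2) with hf_def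
    have hcont : Continuous f := torus_integrand_cont R r
    have hzero : ∀ z : ℝ, z ∉ Icc (-r) r → f z = 0 := by
      intro z hz
      simp only [mem_Icc, not_and_or, not_le] at hz
      have h0 : r ^ 2 - z ^ 2 ≤ 0 := by rcases hz with h | h <;> nlinarith
      have hs0 : Real.sqrt (r ^ 2 - z ^ 2) = 0 := Real.sqrt_eq_zero'.2 h0
      simp [hf_def, hs0]
    have hsupp : HasCompactSupport f :=
      HasCompactSupport.intro isCompact_Icc hzero
    have hint : Integrable f volume := hcont.integrable_of_hasCompactSupport hsupp
    have hnn : 0 ≤ᵐ[volume] f :=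
      Filter.Eventually.of_forall fun z =>
        mul_nonneg (mul_nonneg (mul_nonneg (by norm_num) Real.pi_nonneg) (by linarith))
          (Real.sqrt_nonneg _)
    rw [← ofReal_integral_eq_lintegral_ofReal hint hnn]
    congr 1
    have hsub : Function.support f ⊆ Ioc (-r) r := by
      intro z hz
      rcases lt_trichotomy (r ^ 2 - z ^ 2) 0 with h | h | h
      · have hs0 : Real.sqrt (r ^ 2 - z ^ 2) = 0 := Real.sqrt_eq_zero'.2 h.le
        exact absurd (by simp [hf_def, hs0]) hz
      · exact absurd (by simp [hf_def, h]) hz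
      · constructor <;> nlinarith
    rw [← intervalIntegral.integral_eq_integral_of_support_subset hsub]
    simp_rw [hf_def]
    rw [intervalIntegral.integral_const_mul, integral_sqrt_sq_sub_sq r hr]
    ring
  · ring
end
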